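/- Algorithm 1 (recursive DT construction by abstraction refinement) is sound and complete: upon termination it returns a decision tree 𝒫(f) with f ∈ argmax_{f ∈ F^𝒫} V(𝒫(f)), i.e., a decision tree of maximal value among all instantiations of the given tree template 𝒫. Moreover, no parameterization of maximal value is ever discarded by the pruning steps unless a parameterization of maximal value has already been recorded as the running optimum. -/

import Mathlib

namespace Paper15

open scoped NNReal

/-- A Markov decision process with finite state space `S`, action set `A`,
an initial state, and a partial transition function assigning to (some) state-action
pairs a probability distribution over states. -/
structure MDP (S A : Type) [Fintype S] where
  init : S
  P : S → A → Option (S → ℝ≥0)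
  sum_one : ∀ s a d, P s a = some d → ∑ s', d s' = 1
  avail_nonempty : ∀ s, ∃ a, (P s a).isSome

variable {S A : Type} [Fintype S] [DecidableEq S]

/-- Action `a` is available in state `s`. -/
def MDP.Avail (M : MDP S A) (s : S) (a : A) : Prop := (M.P s a).isSome

/-- A (memoryless deterministic) policy: selects an available action in every state. -/
def MDP.IsPolicy (M : MDP S A) (σ : S → A) : Prop := ∀ s, M.Avail s (σ s)

/-- Transition matrix of the Markov chain induced by policy `σ`. -/
def MDP.trans (M : MDP S A) (σ : S → A) (s s' : S) : ℝ≥0 :=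
  ((M.P s (σ s)).getD fun _ => 0) s'

/-- Probability of reaching the goal set `G` within `n` steps. -/
def reachAux (T : S → S → ℝ≥0) (G : Finset S) : ℕ → S → ℝ≥0
  | 0, s => if s ∈ G then 1 else 0
  | n + 1, s => if s ∈ G then 1 else ∑ s', T s s' * reachAux T G n s'

/-- Probability of reaching the goal set `G` from state `s` in the Markov chain
with transition matrix `T`. -/
noncomputable def reachProb (T : S → S → ℝ≥0) (G : Finset S) (s : S) : ℝ≥0 :=
  ⨆ n, reachAux T G n s

/-- Value of policy `σ`: probability of reaching `G` from the initial state in the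
induced Markov chain. -/
noncomputable def MDP.polValue (M : MDP S A) (G : Finset S) (σ : S → A) : ℝ≥0 :=
  reachProb (M.trans σ) G M.init

/-- Value of the MDP: supremum of policy values. -/
noncomputable def MDP.value (M : MDP S A) (G : Finset S) : ℝ≥0 :=
  ⨆ σ : { σ : S → A // M.IsPolicy σ }, M.polValue G σ.1

/-- A decision tree for an MDP whose states are valuations of the variables in `Var`:
leaves carry actions from `A`, inner nodes carry a state predicate `v ≤ b`
(a variable `v : Var` together with an integer bound `b`); the left subtree
corresponds to states satisfying the predicate, the right subtree to the others. -/
inductive DT (Var A : Type) : Type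
  | leaf (a : A)
  | node (v : Var) (b : ℤ) (l r : DT Var A)

variable {Var A : Type}

/-- Evaluation of a decision tree on a state (valuation): follow the predicates
from the root to a leaf and return the leaf's action. -/
def DT.eval : DT Var A → (Var → ℤ) → A
  | .leaf a, _ => a
  | .node v b l r, s => if s v ≤ b then l.eval s else r.eval s

/-- Depth of a decision tree. -/
def DT.depth : DT Var A → ℕ
  | .leaf _ => 0
  | .node _ _ l r => max l.depth r.depth + 1

/-- `t.IsLeafAt π` holds iff the path `π` (list of booleans; `true` = go left)
leads from the root of `t` to a leaf. -/
def DT.IsLeafAt : DT Var A → List Bool → Prop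
  | .leaf _, [] => True
  | .node _ _ l _, true :: p => l.IsLeafAt p
  | .node _ _ _ r, false :: p => r.IsLeafAt p
  | _, _ => False

/-- The set of states (within the state space `X`) corresponding to the node of the
tree reached by path `π`: the root corresponds to all of `X`, the left child of a node
to the states of the node satisfying its predicate, and the right child to those
not satisfying it.  Invalid paths correspond to `∅`. -/
def DT.statesAt : DT Var A → Set (Var → ℤ) → List Bool → Set (Var → ℤ)
  | _, X, [] => X
  | .node v b l _, X, true :: p => l.statesAt {s ∈ X | s v ≤ b} p
  | .node v b _ r, X, false :: p => r.statesAt {s ∈ X | ¬ s v ≤ b} p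
  | .leaf _, _, _ :: _ => ∅

/-- The skeleton (topology) of a binary tree: the underlying tree `T` of a tree
template, forgetting all labels. -/
inductive Skel : Type
  | leaf
  | node (l r : Skel)

/-- `sk.IsInnerAt π` holds iff the path `π` (`true` = left) leads from the root
to an inner node of the skeleton. -/
def Skel.IsInnerAt : Skel → List Bool → Prop
  | .node _ _, [] => True
  | .node l _, true :: p => l.IsInnerAt p
  | .node _ r, false :: p => r.IsInnerAt p
  | _, _ => False

/-- `sk.IsLeafAt π` holds iff the path `π` leads from the root to a leaf
of the skeleton. -/
def Skel.IsLeafAt : Skel → List Bool → Prop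
  | .leaf, [] => True
  | .node l _, true :: p => l.IsLeafAt p
  | .node _ r, false :: p => r.IsLeafAt p
  | _, _ => False

/-- A parameterization `f = (δ̂, β, α̂)` of a tree template: a variable-selection
function, a bound-selection function (on inner nodes, addressed by root-to-node
paths) and an action-selection function (on leaves). -/
structure Param (Var A : Type) where
  dvar : List Bool → Var
  bound : List Bool → ℤ
  act : List Bool → A

/-- The decision tree `𝒫(f)` instantiated from the skeleton by the
parameterization `f`. -/
def Skel.build : Skel → Param Var A → List Bool → DT Var A
  | .leaf, f, p => .leaf (f.act p)
  | .node l r, f, p =>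
      .node (f.dvar p) (f.bound p) (l.build f (p ++ [true])) (r.build f (p ++ [false]))

/-- A rectangular set of parameterizations `F`. -/
structure FamSet (Var A : Type) where
  dvarS : List Bool → Set Var
  boundS : List Bool → Set ℤ
  actS : List Bool → Set A

/-- `f ∈ F`: the parameterization `f` belongs to the rectangular set `F`. -/
def memF (sk : Skel) (F : FamSet Var A) (f : Param Var A) : Prop :=
  (∀ p, sk.IsInnerAt p → f.dvar p ∈ F.dvarS p ∧ f.bound p ∈ F.boundS p) ∧
  (∀ p, sk.IsLeafAt p → f.act p ∈ F.actS p)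

variable {Var : Type}

/-- The policy induced by a decision tree in the MDP `M` whose states carry the
variable valuations `val`: play the action of the leaf the state is routed to if it
is available, and otherwise fall back to the random action `astar`. -/
def indPol (M : MDP S A) (val : S → Var → ℤ) (astar : A) (t : DT Var A) (s : S) : A :=
  if (M.P s (t.eval (val s))).isSome then t.eval (val s) else astar

/-- The policy induced by the decision tree `𝒫(f)` instantiated from skeleton `sk`
by parameterization `f`. -/
def indOf (M : MDP S A) (val : S → Var → ℤ) (astar : A) (sk : Skel)
    (f : Param Var A) : S → A :=
  indPol M val astar (sk.build f [])

/-- Action `a` is enabled in state `s` in the family-MDP `M(F)` of the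
parameterization subset `F`. -/
def famEnabled (M : MDP S A) (val : S → Var → ℤ) (astar : A) (sk : Skel)
    (F : Set (Param Var A)) (s : S) (a : A) : Prop :=
  M.Avail s a ∧ ∃ f ∈ F, indOf M val astar sk f s = a

/-- `σ` is a policy of the family-MDP `M(F)`. -/
def IsFamPolicy (M : MDP S A) (val : S → Var → ℤ) (astar : A) (sk : Skel)
    (F : Set (Param Var A)) (σ : S → A) : Prop :=
  ∀ s, famEnabled M val astar sk F s (σ s)

/-- Membership in `F^𝒫`, the largest finite set of parameterizations of the template:
every bound is a value `val s v` of some variable in some state. -/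
def memFP (val : S → Var → ℤ) (sk : Skel) (f : Param Var A) : Prop :=
  ∀ p, sk.IsInnerAt p → ∃ s v, f.bound p = val s v

/-- `f` is a parameterization of maximal value among all of `F^𝒫`. -/
noncomputable def IsMax (M : MDP S A) (val : S → Var → ℤ) (astar : A) (G : Finset S)
    (sk : Skel) (f : Param Var A) : Prop :=
  memFP val sk f ∧ ∀ f' : Param Var A, memFP val sk f' →
    M.polValue G (indOf M val astar sk f') ≤ M.polValue G (indOf M val astar sk f)

/-- The value `V_best` of the running optimum (`⊥` = `-∞` when no optimum has been
recorded yet). -/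
noncomputable def bestVal (M : MDP S A) (val : S → Var → ℤ) (astar : A) (G : Finset S)
    (sk : Skel) : Option (Param Var A) → WithBot ℝ≥0
  | none => ⊥
  | some f => (M.polValue G (indOf M val astar sk f) : WithBot ℝ≥0)

/-- One iteration of Algorithm 1 on states `(stack of parameterization subsets,
running optimum f_best)`.  The popped subset `F` is analyzed via a policy `σ`
maximizing the value over all policies of the family-MDP `M(F)`; `F` is pruned if
`V(σ) ≤ V_best`; it is pruned with the optimum updated if `Φ(F, σ)` is satisfiable
(i.e. some `f ∈ F` induces `σ`); otherwise `F` is split into `F₁, F₂` with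
`F₁ ∪ F₂ = F` (possibly also raising the running optimum to some concrete
parameterization of `F` with a better value). -/
inductive Step {S A Var : Type} [Fintype S] [DecidableEq S]
    (M : MDP S A) (val : S → Var → ℤ) (astar : A) (G : Finset S) (sk : Skel) :
    List (Set (Param Var A)) × Option (Param Var A) →
    List (Set (Param Var A)) × Option (Param Var A) → Prop
  | prune (F : Set (Param Var A)) (rest : List (Set (Param Var A)))
      (b : Option (Param Var A)) (σ : S → A)
      (hpol : IsFamPolicy M val astar sk F σ)
      (hmax : ∀ σ' : S → A, IsFamPolicy M val astar sk F σ' →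
        M.polValue G σ' ≤ M.polValue G σ)
      (hle : (M.polValue G σ : WithBot ℝ≥0) ≤ bestVal M val astar G sk b) :
      Step M val astar G sk (F :: rest, b) (rest, b)
  | accept (F : Set (Param Var A)) (rest : List (Set (Param Var A)))
      (b : Option (Param Var A)) (σ : S → A) (f : Param Var A)
      (hpol : IsFamPolicy M val astar sk F σ)
      (hmax : ∀ σ' : S → A, IsFamPolicy M val astar sk F σ' →
        M.polValue G σ' ≤ M.polValue G σ)
      (hgt : bestVal M val astar G sk b < (M.polValue G σ : WithBot ℝ≥0))
      (hsat : f ∈ F ∧ ∀ s, indOf M val astar sk f s = σ s) :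
      Step M val astar G sk (F :: rest, b) (rest, some f)
  | split (F F₁ F₂ : Set (Param Var A)) (rest : List (Set (Param Var A)))
      (b b' : Option (Param Var A)) (σ : S → A)
      (hpol : IsFamPolicy M val astar sk F σ)
      (hmax : ∀ σ' : S → A, IsFamPolicy M val astar sk F σ' →
        M.polValue G σ' ≤ M.polValue G σ)
      (hgt : bestVal M val astar G sk b < (M.polValue G σ : WithBot ℝ≥0))
      (hunsat : ¬ ∃ f ∈ F, ∀ s, indOf M val astar sk f s = σ s)
      (hcover : F₁ ∪ F₂ = F)
      (hb : b' = b ∨ ∃ f' ∈ F,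
        bestVal M val astar G sk b < (M.polValue G (indOf M val astar sk f') : WithBot ℝ≥0) ∧
        b' = some f') :
      Step M val astar G sk (F :: rest, b) (F₁ :: F₂ :: rest, b')

/-- **Theorem 4.** Algorithm 1 is sound and complete: starting from the
stack `[F^𝒫]` with no recorded optimum, upon termination (empty stack) the recorded
optimum is a parameterization of maximal value among all of `F^𝒫`; moreover, in every
reachable configuration, either the recorded optimum is already of maximal value or
some subset on the stack still contains a parameterization of maximal value (i.e. no
maximal parameterization is ever discarded by the pruning steps unless a maximal one
has been recorded). -/
theorem algorithm_sound_complete {S A Var : Type}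
    [Fintype S] [DecidableEq S] [Fintype A] [Fintype Var] [Nonempty Var]
    (M : MDP S A) (val : S → Var → ℤ) (astar : A) (hstar : ∀ s, M.Avail s astar)
    (G : Finset S) (sk : Skel) :
    (∀ b : Option (Param Var A),
      Relation.ReflTransGen (Step M val astar G sk)
        ([{f | memFP val sk f}], none) ([], b) →
      ∃ f, b = some f ∧ IsMax M val astar G sk f) ∧
    (∀ st : List (Set (Param Var A)) × Option (Param Var A),
      Relation.ReflTransGen (Step M val astar G sk)
        ([{f | memFP val sk f}], none) st →
      (∃ fb, st.2 = some fb ∧ IsMax M val astar G sk fb) ∨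
        ∃ F ∈ st.1, ∃ f ∈ F, IsMax M val astar G sk f) := by
  classical
  set FP : Set (Param Var A) := {f | memFP val sk f} with hFPdef
  set Vf : Param Var A → ℝ≥0 := fun f => M.polValue G (indOf M val astar sk f) with hVfdef
  -- the policy induced by any `f ∈ F` is a policy of the family-MDP `M(F)`
  have hfam : ∀ (F : Set (Param Var A)) (f : Param Var A), f ∈ F →
      IsFamPolicy M val astar sk F (indOf M val astar sk f) := by
    intro F f hf s
    refine ⟨?_, f, hf, rfl⟩
    show (M.P s _).isSome
    unfold indOf indPol
    split
    · assumption
    · exact hstar s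
  -- existence of a maximal parameterization in `F^𝒫`
  have hS : Nonempty S := ⟨M.init⟩
  obtain ⟨v0⟩ := (inferInstance : Nonempty Var)
  have hf0 : (⟨fun _ => v0, fun _ => val M.init v0, fun _ => astar⟩ : Param Var A) ∈ FP :=
    fun p _ => ⟨M.init, v0, rfl⟩
  have hFPne : FP.Nonempty := ⟨_, hf0⟩
  have himfin : (Vf '' FP).Finite := by
    refine (Set.finite_range (fun σ : S → A => M.polValue G σ)).subset ?_
    rintro _ ⟨f, -, rfl⟩
    exact ⟨indOf M val astar sk f, rfl⟩
  obtain ⟨fmax, hfmaxFP, hfmaxmax⟩ :=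
    Set.Finite.exists_maximalFor' Vf FP himfin hFPne
  have hfmax : IsMax M val astar G sk fmax := by
    refine ⟨hfmaxFP, fun f' hf' => ?_⟩
    rcases le_total (Vf f') (Vf fmax) with h | h
    · exact h
    · exact hfmaxmax hf' h
  -- value comparison for max parameterizations via the recorded optimum
  have hIsMaxOf : ∀ f fb : Param Var A, IsMax M val astar G sk f → memFP val sk fb →
      Vf f ≤ Vf fb → IsMax M val astar G sk fb := by
    intro f fb hf hfb hle
    exact ⟨hfb, fun f' hf' => le_trans (hf.2 f' hf') hle⟩
  -- the invariant
  have key : ∀ st, Relation.ReflTransGen (Step M val astar G sk) ([FP], none) st →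
      (∀ F ∈ st.1, F ⊆ FP) ∧
      (∀ fb, st.2 = some fb → memFP val sk fb) ∧
      ((∃ fb, st.2 = some fb ∧ IsMax M val astar G sk fb) ∨
        ∃ F ∈ st.1, ∃ f ∈ F, IsMax M val astar G sk f) := by
    intro st h
    induction h with
    | refl =>
        refine ⟨?_, ?_, Or.inr ⟨FP, by simp, fmax, hfmaxFP, hfmax⟩⟩
        · intro F hF; simp at hF; subst hF; exact le_refl _
        · intro fb hfb; simp at hfb
    | tail hsteps step ih =>
        obtain ⟨ihsub, ihmem, ihmax⟩ := ih
        cases step with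
        | prune F rest b σ hpol hmaxσ hle =>
            refine ⟨fun F' hF' => ihsub F' (List.mem_cons_of_mem _ hF'), ihmem, ?_⟩
            rcases ihmax with hL | ⟨F', hF', f, hfF', hIsf⟩
            · exact Or.inl hL
            rcases List.mem_cons.mp hF' with rfl | hF'
            · -- the pruned set contained a maximal parameterization
              have hvf : Vf f ≤ M.polValue G σ := hmaxσ _ (hfam F' f hfF')
              cases b with
              | none => exact absurd hle (by simp [bestVal])
              | some fb =>
                  have hfb : memFP val sk fb := ihmem fb rfl
                  have hle' : M.polValue G σ ≤ Vf fb := by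
                    simpa [bestVal, Vf] using hle
                  exact Or.inl ⟨fb, rfl, hIsMaxOf f fb hIsf hfb (le_trans hvf hle')⟩
            · exact Or.inr ⟨F', hF', f, hfF', hIsf⟩
        | accept F rest b σ f hpol hmaxσ hgt hsat =>
            have hfFP : memFP val sk f := ihsub F (by simp) hsat.1
            have hσf : M.polValue G σ = Vf f := by
              have : indOf M val astar sk f = σ := funext hsat.2
              simp [Vf, this]
            refine ⟨fun F' hF' => ihsub F' (List.mem_cons_of_mem _ hF'),
              fun fb hfb => by cases hfb; exact hfFP, ?_⟩
            rcases ihmax with ⟨fb, hb, hIsfb⟩ | ⟨F', hF', f', hf'F', hIsf'⟩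
            · -- old optimum was maximal: new one has at least its value
              subst hb
              have : Vf fb < Vf f := by
                have := hgt
                rw [hσf] at this
                simpa [bestVal, Vf] using this
              exact Or.inl ⟨f, rfl, hIsMaxOf fb f hIsfb hfFP this.le⟩
            rcases List.mem_cons.mp hF' with rfl | hF'
            · have hvf : Vf f' ≤ M.polValue G σ := hmaxσ _ (hfam F' f' hf'F')
              rw [hσf] at hvf
              exact Or.inl ⟨f, rfl, hIsMaxOf f' f hIsf' hfFP hvf⟩
            · exact Or.inr ⟨F', hF', f', hf'F', hIsf'⟩
        | split F F₁ F₂ rest b b' σ hpol hmaxσ hgt hunsat hcover hb =>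
            have hFsub : F ⊆ FP := ihsub F (by simp)
            have hsub : ∀ F' ∈ F₁ :: F₂ :: rest, F' ⊆ FP := by
              intro F' hF'
              rcases List.mem_cons.mp hF' with rfl | hF'
              · exact fun x hx => hFsub (hcover ▸ Set.mem_union_left _ hx)
              rcases List.mem_cons.mp hF' with rfl | hF'
              · exact fun x hx => hFsub (hcover ▸ Set.mem_union_right _ hx)
              · exact ihsub F' (List.mem_cons_of_mem _ hF')
            have hmem' : ∀ fb, b' = some fb → memFP val sk fb := by
              intro fb hfb
              rcases hb with rfl | ⟨f', hf'F, -, rfl⟩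
              · exact ihmem fb hfb
              · cases hfb; exact hFsub hf'F
            refine ⟨hsub, hmem', ?_⟩
            rcases ihmax with ⟨fb, hbb, hIsfb⟩ | ⟨F', hF', f', hf'F', hIsf'⟩
            · -- old optimum maximal; new optimum (if changed) is at least as good
              subst hbb
              rcases hb with rfl | ⟨f'', hf''F, hlt, rfl⟩
              · exact Or.inl ⟨fb, rfl, hIsfb⟩
              · have hlt' : Vf fb < Vf f'' := by
                  simpa [bestVal, Vf] using hlt
                exact Or.inl ⟨f'', rfl, hIsMaxOf fb f'' hIsfb (hFsub hf''F) hlt'.le⟩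
            rcases List.mem_cons.mp hF' with rfl | hF'
            · rcases (hcover ▸ hf'F' : f' ∈ F₁ ∪ F₂) with h1 | h2
              · exact Or.inr ⟨F₁, by simp, f', h1, hIsf'⟩
              · exact Or.inr ⟨F₂, by simp, f', h2, hIsf'⟩
            · exact Or.inr ⟨F', List.mem_cons_of_mem _ (List.mem_cons_of_mem _ hF'), f', hf'F', hIsf'⟩
  constructor
  · intro b h
    obtain ⟨-, -, hmax'⟩ := key ([], b) h
    rcases hmax' with ⟨fb, hb, hIs⟩ | ⟨F, hF, -⟩
    · exact ⟨fb, hb, hIs⟩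
    · simp at hF
  · intro st h
    exact (key st h).2.2

end Paper15
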